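/- Let (r_α)_{α>0} be a generator of a regularisation method and let φ : [0,∞) → [0,∞) be an increasing, continuous function with φ(0) = 0 such that for some constant A > 0 the inequality √(ṙ_α(λ))·φ(λ) ≤ A·φ(α) holds for all λ > 0 and all α > 0. Let d_φ(R) := inf{‖x† − φ(L*L)ξ‖ : ξ ∈ X, ‖ξ‖ ≤ R} be the distance function, and let ν ∈ (0,1). Then the following are equivalent: (1) there exists C > 0 such that e(λ) ≤ C·φ(λ)^{2ν} for all λ > 0; (2) there exists C̃ > 0 such that d_φ(R) ≤ C̃·R^{−ν/(1−ν)} for all R > 0. (Proposition 5.3.) -/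

import Mathlib

open RealInnerProductSpace

private lemma le_of_sq_le_sq' {a c : ℝ} (hc : 0 ≤ c) (h : a ^ 2 ≤ c ^ 2) (ha : 0 ≤ a) : a ≤ c := by
  nlinarith

section proj
variable {X : Type*} [NormedAddCommGroup X] [InnerProductSpace ℝ X]

private lemma proj_self_inner (E : ℝ → X →L[ℝ] X)
    (hEsa : ∀ t : ℝ, ∀ u v : X, ⟪E t u, v⟫ = ⟪u, E t v⟫)
    (hEcomp : ∀ s t : ℝ, ∀ u : X, E s (E t u) = E (min s t) u)
    (t : ℝ) (u : X) : ⟪u, E t u⟫ = ‖E t u‖ ^ 2 := by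
  have h1 : ⟪E t u, E t u⟫ = ⟪u, E t (E t u)⟫ := hEsa t u (E t u)
  rw [hEcomp, min_self] at h1
  rw [← h1, real_inner_self_eq_norm_sq]

private lemma proj_norm_le (E : ℝ → X →L[ℝ] X)
    (hEsa : ∀ t : ℝ, ∀ u v : X, ⟪E t u, v⟫ = ⟪u, E t v⟫)
    (hEcomp : ∀ s t : ℝ, ∀ u : X, E s (E t u) = E (min s t) u)
    (t : ℝ) (u : X) : ‖E t u‖ ≤ ‖u‖ := by
  have h1 := proj_self_inner E hEsa hEcomp t u
  have h2 := real_inner_le_norm u (E t u)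
  nlinarith [norm_nonneg (E t u), norm_nonneg u]

private lemma proj_cross (E : ℝ → X →L[ℝ] X)
    (hEsa : ∀ t : ℝ, ∀ u v : X, ⟪E t u, v⟫ = ⟪u, E t v⟫)
    (hEcomp : ∀ s t : ℝ, ∀ u : X, E s (E t u) = E (min s t) u)
    (s t : ℝ) (hst : s ≤ t) (x : X) :
    ⟪E t x, E s x⟫ = ‖E s x‖ ^ 2 := by
  have h1 : ⟪E t x, E s x⟫ = ⟪x, E t (E s x)⟫ := hEsa t x (E s x)
  rw [hEcomp, min_eq_right hst] at h1
  rw [h1, proj_self_inner E hEsa hEcomp]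

private lemma proj_diff_sq (E : ℝ → X →L[ℝ] X)
    (hEsa : ∀ t : ℝ, ∀ u v : X, ⟪E t u, v⟫ = ⟪u, E t v⟫)
    (hEcomp : ∀ s t : ℝ, ∀ u : X, E s (E t u) = E (min s t) u)
    (s t : ℝ) (hst : s ≤ t) (x : X) :
    ‖E t x - E s x‖ ^ 2 = ‖E t x‖ ^ 2 - ‖E s x‖ ^ 2 := by
  have h := norm_sub_sq_real (E t x) (E s x)
  rw [proj_cross E hEsa hEcomp s t hst] at h
  ring_nf at h ⊢
  linarith

private lemma proj_diff_le (E : ℝ → X →L[ℝ] X)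
    (hEsa : ∀ t : ℝ, ∀ u v : X, ⟪E t u, v⟫ = ⟪u, E t v⟫)
    (hEcomp : ∀ s t : ℝ, ∀ u : X, E s (E t u) = E (min s t) u)
    (s t : ℝ) (hst : s ≤ t) (x : X) :
    ‖E t x - E s x‖ ≤ ‖E t x‖ := by
  apply le_of_sq_le_sq' (norm_nonneg _) _ (norm_nonneg _)
  rw [proj_diff_sq E hEsa hEcomp s t hst]
  nlinarith [sq_nonneg ‖E s x‖]

end proj

open MeasureTheory Filter

set_option maxHeartbeats 1000000 in
theorem statement19
    {X : Type*} [NormedAddCommGroup X] [InnerProductSpace ℝ X] [CompleteSpace X]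
    {Y : Type*} [NormedAddCommGroup Y] [InnerProductSpace ℝ Y] [CompleteSpace Y]
    (L : X →L[ℝ] Y) (y : Y) (xdag : X)
    (hsol : L xdag = y) (hmin : ∀ x : X, L x = y → ‖xdag‖ ≤ ‖x‖)
    (r : ℝ → ℝ → ℝ) (ρ ρt : ℝ) (hρ0 : 0 < ρ) (hρ1 : ρ < 1) (hρt0 : 0 < ρt) (hρt1 : ρt < 1)
    (hrcont : ∀ α > (0:ℝ), ContinuousOn (r α) (Set.Ici 0))
    (hrnonneg : ∀ α > (0:ℝ), ∀ t ∈ Set.Ici (0:ℝ), 0 ≤ r α t)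
    (hrbound : ∀ α > (0:ℝ), ∀ t > (0:ℝ), r α t ≤ min (1 / t) (ρ / Real.sqrt (α * t)))
    (hrt_anti : ∀ α > (0:ℝ), AntitoneOn (fun t => (1 - t * r α t) ^ 2) (Set.Ici 0))
    (hrt_cont : ∀ t ∈ Set.Ici (0:ℝ), ContinuousOn (fun α => (1 - t * r α t) ^ 2) (Set.Ioi 0))
    (hrt_mono : ∀ t ∈ Set.Ici (0:ℝ), MonotoneOn (fun α => (1 - t * r α t) ^ 2) (Set.Ioi 0))
    (hrt_lt : ∀ α > (0:ℝ), (1 - α * r α α) ^ 2 < ρt)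
    (xa : ℝ → X)
    (φ : ℝ → ℝ) (hφmono : MonotoneOn φ (Set.Ici 0))
    (hφcont : ContinuousOn φ (Set.Ici 0)) (hφ0 : φ 0 = 0)
    (hφnn : ∀ t ∈ Set.Ici (0:ℝ), 0 ≤ φ t)
    (A : ℝ) (hA : 0 < A)
    (hqual : ∀ α > (0:ℝ), ∀ t > (0:ℝ), Real.sqrt ((1 - t * r α t) ^ 2) * φ t ≤ A * φ α)
    (E : ℝ → X →L[ℝ] X)
    (hEsa : ∀ t : ℝ, ∀ u v : X, ⟪E t u, v⟫ = ⟪u, E t v⟫)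
    (hEcomp : ∀ s t : ℝ, ∀ u : X, E s (E t u) = E (min s t) u)
    (hEtop : ∀ t : ℝ, ‖L‖ ^ 2 ≤ t → ∀ u : X, E t u = u)
    (hE0dag : E 0 xdag = 0)
    (hEr : ∀ u : X, ∀ t : ℝ, Tendsto (fun s => E s u) (nhdsWithin t (Set.Ioi t)) (nhds (E t u)))
    (e : StieltjesFunction ℝ)
    (he : ∀ t ∈ Set.Ici (0:ℝ), e t = ‖E t xdag‖ ^ 2)
    (hint : ∀ α > (0:ℝ),
      ‖xa α - xdag‖ ^ 2 = ∫ t in Set.Ioc (0:ℝ) (‖L‖ ^ 2), (1 - t * r α t) ^ 2 ∂e.measure)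
    (Aφ : X →L[ℝ] X)
    (hAsa : ∀ u v : X, ⟪Aφ u, v⟫ = ⟪u, Aφ v⟫)
    (hAcomm : ∀ t : ℝ, ∀ u : X, Aφ (E t u) = E t (Aφ u))
    (hA0ub : ∀ t ∈ Set.Ici (0:ℝ), ∀ x : X, ‖Aφ (E t x)‖ ≤ φ t * ‖E t x‖)
    (hAub : ∀ s t : ℝ, 0 ≤ s → s ≤ t → ∀ x : X,
      ‖Aφ (E t x - E s x)‖ ≤ φ t * ‖E t x - E s x‖)
    (hAlb : ∀ s t : ℝ, 0 ≤ s → s ≤ t → ∀ x : X,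
      φ s * ‖E t x - E s x‖ ≤ ‖Aφ (E t x - E s x)‖)
    (hAinv : ∀ s t : ℝ, 0 < s → s ≤ t → 0 < φ s → ∀ x : X,
      ∃ w : X, Aφ w = E t x - E s x ∧ E t w - E s w = w)
    (T : ℝ → X →L[ℝ] X)
    (hT : ∀ α > (0:ℝ), xa α - xdag = T α xdag)
    (hTnorm : ∀ α > (0:ℝ), ∀ c : ℝ, 0 ≤ c →
      (∀ t ∈ Set.Icc (0:ℝ) (‖L‖ ^ 2), Real.sqrt ((1 - t * r α t) ^ 2) ≤ c) →
      ∀ z : X, ‖T α z‖ ≤ c * ‖z‖)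
    (hTA : ∀ α > (0:ℝ), ∀ c : ℝ, 0 ≤ c →
      (∀ t ∈ Set.Icc (0:ℝ) (‖L‖ ^ 2), Real.sqrt ((1 - t * r α t) ^ 2) * φ t ≤ c) →
      ∀ ξ : X, ‖T α (Aφ ξ)‖ ≤ c * ‖ξ‖)
    (ν : ℝ) (hν : ν ∈ Set.Ioo (0:ℝ) 1) :
    (∃ C : ℝ, 0 < C ∧ ∀ t > (0:ℝ), e t ≤ C * φ t ^ (2 * ν))
    ↔ (∃ Ct : ℝ, 0 < Ct ∧ ∀ R > (0:ℝ),
        (⨅ ξ : {ξ : X // ‖ξ‖ ≤ R}, ‖xdag - Aφ ξ.1‖) ≤ Ct * R ^ (-(ν / (1 - ν)))) := by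
  obtain ⟨hν0, hν1⟩ := hν
  have h1ν : (0:ℝ) < 1 - ν := by linarith
  have hq0 : 0 < ν / (1 - ν) := div_pos hν0 h1ν
  set q := ν / (1 - ν) with hqdef
  have hproj := proj_norm_le E hEsa hEcomp
  have hdiffle := proj_diff_le E hEsa hEcomp
  have hb0 : (0:ℝ) ≤ ‖L‖ ^ 2 := by positivity
  have hxdagtop : E (‖L‖ ^ 2) xdag = xdag := hEtop _ le_rfl xdag
  have hinf_le : ∀ R : ℝ, ∀ ξ : X, ‖ξ‖ ≤ R →
      (⨅ ξ : {ξ : X // ‖ξ‖ ≤ R}, ‖xdag - Aφ ξ.1‖) ≤ ‖xdag - Aφ ξ‖ := by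
    intro R ξ hξ
    exact ciInf_le ⟨0, by rintro x ⟨i, rfl⟩; exact norm_nonneg _⟩
      (⟨ξ, hξ⟩ : {ξ : X // ‖ξ‖ ≤ R})
  constructor
  · rintro ⟨C, hC, h1⟩
    by_cases hx0 : xdag = 0
    · refine ⟨1, one_pos, fun R hR => ?_⟩
      have h := hinf_le R 0 (by simpa using hR.le)
      simp only [map_zero, sub_zero] at h
      have hxnorm : ‖xdag‖ = 0 := by rw [hx0, norm_zero]
      have hge : (0:ℝ) ≤ 1 * R ^ (-q) := by positivity
      linarith
    · have hxn : 0 < ‖xdag‖ := norm_pos_iff.mpr hx0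
      have hbpos : 0 < ‖L‖ ^ 2 := by
        rcases hb0.lt_or_eq with h | h
        · exact h
        · exfalso
          apply hx0
          rw [← hEtop 0 h.ge xdag, hE0dag]
      have hδnn' : 0 ≤ φ (‖L‖^2) := hφnn _ hb0
      obtain ⟨δ, hδdef⟩ : ∃ d : ℝ, d = φ (‖L‖^2) := ⟨_, rfl⟩
      have hδnn : 0 ≤ δ := hδdef ▸ hδnn'
      have hδ : 0 < δ := by
        rcases hδnn.lt_or_eq with h | h
        · exact h
        · exfalso
          have heb := h1 (‖L‖^2) hbpos
          rw [he _ hb0, hxdagtop, ← hδdef, ← h, Real.zero_rpow (by positivity)] at heb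
          linarith only [heb, mul_pos hxn hxn]
      have hPpos : ∀ x : ℝ, (0:ℝ) < (2:ℝ) ^ x := fun x => Real.rpow_pos_of_pos two_pos x
      have hsqrtC : 0 < Real.sqrt C := Real.sqrt_pos.mpr hC
      -- IVT levels
      have hIVT : ∀ j : ℕ, ∃ l : ℝ, (0 < l ∧ l ≤ ‖L‖^2) ∧ φ l = δ * (2:ℝ) ^ (-(j:ℝ)) := by
        intro j
        have hmem : δ * (2:ℝ) ^ (-(j:ℝ)) ∈ Set.Icc (φ 0) (φ (‖L‖^2)) := by
          constructor
          · rw [hφ0]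
            exact (mul_pos hδ (hPpos _)).le
          · rw [← hδdef]
            have h2le : (2:ℝ) ^ (-(j:ℝ)) ≤ 1 :=
              Real.rpow_le_one_of_one_le_of_nonpos one_le_two (neg_nonpos_of_nonneg (Nat.cast_nonneg j))
            exact mul_le_of_le_one_right hδnn h2le
        obtain ⟨l, hl, hφl⟩ := intermediate_value_Icc hb0
          (hφcont.mono (fun x hx => hx.1)) hmem
        refine ⟨l, ⟨?_, hl.2⟩, hφl⟩
        rcases hl.1.lt_or_eq with h | h
        · exact h
        · exfalso
          rw [← h, hφ0] at hφl
          linarith only [hφl, mul_pos hδ (hPpos (-(j:ℝ)))]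
      choose lam hlam hlamφ using hIVT
      have hlamdec : ∀ j : ℕ, lam (j+1) ≤ lam j := by
        intro j
        by_contra hcon
        push_neg at hcon
        have hm := hφmono (Set.mem_Ici.mpr (hlam j).1.le)
          (Set.mem_Ici.mpr (hlam (j+1)).1.le) hcon.le
        rw [hlamφ, hlamφ] at hm
        push_cast at hm
        have hlt : (2:ℝ) ^ (-((j:ℝ)+1)) < (2:ℝ) ^ (-(j:ℝ)) :=
          Real.rpow_lt_rpow_of_exponent_lt one_lt_two (by linarith)
        linarith only [hm, mul_lt_mul_of_pos_left hlt hδ]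
      -- spectral tail bounds
      have heE : ∀ j : ℕ, ‖E (lam j) xdag‖ ≤ Real.sqrt C * δ ^ ν * (2:ℝ) ^ (-(j:ℝ)*ν) := by
        intro j
        have h := h1 (lam j) (hlam j).1
        rw [he _ (hlam j).1.le, hlamφ j] at h
        apply le_of_sq_le_sq' (mul_nonneg (mul_nonneg (Real.sqrt_nonneg C)
          (Real.rpow_pos_of_pos hδ ν).le) (hPpos _).le) _ (norm_nonneg _)
        calc ‖E (lam j) xdag‖^2 ≤ C * (δ * (2:ℝ)^(-(j:ℝ)))^(2*ν) := h
          _ = (Real.sqrt C * δ ^ ν * (2:ℝ)^(-(j:ℝ)*ν))^2 := by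
              have e1 : (δ * (2:ℝ)^(-(j:ℝ)))^(2*ν)
                  = δ^(2*ν) * (2:ℝ)^(-(j:ℝ)*(2*ν)) := by
                rw [Real.mul_rpow hδ.le (hPpos _).le]
                congr 1
                rw [← Real.rpow_mul (by norm_num : (0:ℝ) ≤ 2)]
              have e2 : δ^(2*ν) = (δ^ν)^2 := by
                rw [← Real.rpow_natCast (δ^ν) 2, ← Real.rpow_mul hδ.le]
                congr 1
                push_cast
                ring
              have e3 : (2:ℝ)^(-(j:ℝ)*(2*ν)) = ((2:ℝ)^(-(j:ℝ)*ν))^2 := by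
                rw [← Real.rpow_natCast ((2:ℝ)^(-(j:ℝ)*ν)) 2,
                  ← Real.rpow_mul (by norm_num : (0:ℝ) ≤ 2)]
                congr 1
                push_cast
                ring
              rw [e1, e2, e3, mul_pow, mul_pow, Real.sq_sqrt hC.le]
              ring
      -- band elements
      choose w hw1 hw2 using fun j : ℕ =>
        hAinv (lam (j+1)) (lam j) (hlam (j+1)).1 (hlamdec j)
          (by rw [hlamφ]; exact mul_pos hδ (hPpos _)) xdag
      obtain ⟨w0, hw01, hw02⟩ :=
        hAinv (lam 0) (‖L‖^2) (hlam 0).1 (hlam 0).2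
          (by rw [hlamφ]; exact mul_pos hδ (hPpos _)) xdag
      have hw0norm : ‖w0‖ ≤ ‖xdag‖ / δ := by
        have h := hAlb (lam 0) (‖L‖^2) (hlam 0).1.le (hlam 0).2 w0
        rw [hw02, hw01] at h
        have h2 : ‖E (‖L‖^2) xdag - E (lam 0) xdag‖ ≤ ‖xdag‖ := by
          have h3 := hdiffle (lam 0) (‖L‖^2) (hlam 0).2 xdag
          exact h3.trans_eq (congrArg norm hxdagtop)
        have h0s : φ (lam 0) = δ := by
          rw [hlamφ]
          norm_num
        rw [h0s] at h
        rw [le_div_iff₀ hδ]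
        linarith only [h, h2]
      obtain ⟨rr, hrrdef⟩ : ∃ x : ℝ, x = (2:ℝ)^(1-ν) := ⟨_, rfl⟩
      have hrr1 : 1 < rr := by
        rw [hrrdef, Real.one_lt_rpow_iff_of_pos two_pos]
        exact Or.inl ⟨one_lt_two, by linarith⟩
      have hrrj : ∀ n : ℕ, rr ^ n = (2:ℝ)^((1-ν)*(n:ℝ)) := by
        intro n
        rw [hrrdef, ← Real.rpow_natCast ((2:ℝ)^(1-ν)) n,
          ← Real.rpow_mul (by norm_num : (0:ℝ) ≤ 2)]
      obtain ⟨K0, hK0def⟩ : ∃ x : ℝ, x = 2 * Real.sqrt C * δ^ν / δ := ⟨_, rfl⟩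
      have hK0 : 0 < K0 := by
        rw [hK0def]
        exact div_pos (mul_pos (mul_pos two_pos hsqrtC) (Real.rpow_pos_of_pos hδ ν)) hδ
      have hwnorm : ∀ j : ℕ, ‖w j‖ ≤ K0 * rr^j := by
        intro j
        have hb := hAlb (lam (j+1)) (lam j) (hlam (j+1)).1.le (hlamdec j) (w j)
        rw [hw2 j, hw1 j] at hb
        have hb' := hb.trans ((hdiffle _ _ (hlamdec j) xdag).trans (heE j))
        rw [hlamφ] at hb'
        push_cast at hb'
        have hpos : 0 < δ * (2:ℝ)^(-((j:ℝ)+1)) := mul_pos hδ (hPpos _)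
        have hc : (2:ℝ)^(-((j:ℝ)+1)) * (2:ℝ)^((1-ν)*(j:ℝ)) = (2:ℝ)^(-(j:ℝ)*ν) / 2 := by
          rw [← Real.rpow_add two_pos,
            show -((j:ℝ)+1) + (1-ν)*(j:ℝ) = -(j:ℝ)*ν + (-1) from by ring,
            Real.rpow_add two_pos, Real.rpow_neg_one]
          ring
        have hEq : δ * (2:ℝ)^(-((j:ℝ)+1)) * (K0 * rr^j)
            = Real.sqrt C * δ^ν * (2:ℝ)^(-(j:ℝ)*ν) := by
          rw [hrrj j, hK0def,
            show δ * (2:ℝ)^(-((j:ℝ)+1)) * (2 * Real.sqrt C * δ^ν / δ * (2:ℝ)^((1-ν)*(j:ℝ)))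
              = (δ/δ) * (2 * Real.sqrt C * δ^ν)
                * ((2:ℝ)^(-((j:ℝ)+1)) * (2:ℝ)^((1-ν)*(j:ℝ))) from by ring,
            div_self hδ.ne', hc]
          ring
        have hb'' : δ * (2:ℝ)^(-((j:ℝ)+1)) * ‖w j‖ ≤ δ * (2:ℝ)^(-((j:ℝ)+1)) * (K0 * rr^j) := by
          rw [hEq]
          exact hb'
        exact (mul_le_mul_iff_right₀ hpos).mp hb''
      obtain ⟨K, hKdef⟩ : ∃ x : ℝ, x = K0 / (rr - 1) := ⟨_, rfl⟩
      have hK : 0 < K := by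
        rw [hKdef]
        exact div_pos hK0 (by linarith)
      obtain ⟨M, hMdef⟩ : ∃ x : ℝ, x = ‖xdag‖ / δ := ⟨_, rfl⟩
      have hM : 0 < M := by
        rw [hMdef]
        exact div_pos hxn hδ
      have hMK : 0 < M + K := by linarith
      -- properties of the candidate ξ_N
      have hξ : ∀ N : ℕ, ‖w0 + ∑ j ∈ Finset.range N, w j‖ ≤ M + K * rr^N ∧
          ‖xdag - Aφ (w0 + ∑ j ∈ Finset.range N, w j)‖
            ≤ Real.sqrt C * δ^ν * (2:ℝ)^(-(N:ℝ)*ν) := by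
        intro N
        constructor
        · calc ‖w0 + ∑ j ∈ Finset.range N, w j‖
              ≤ ‖w0‖ + ∑ j ∈ Finset.range N, ‖w j‖ := by
                refine (norm_add_le _ _).trans ?_
                exact add_le_add le_rfl (norm_sum_le _ _)
            _ ≤ M + ∑ j ∈ Finset.range N, K0 * rr^j := by
                rw [hMdef]
                exact add_le_add hw0norm (Finset.sum_le_sum fun j _ => hwnorm j)
            _ ≤ M + K * rr^N := by
                rw [← Finset.mul_sum, geom_sum_eq hrr1.ne' N]
                have h9 : K0 * ((rr^N - 1)/(rr-1)) ≤ K * rr^N := by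
                  calc K0 * ((rr^N - 1)/(rr-1)) ≤ K0 * (rr^N/(rr-1)) := by
                        apply mul_le_mul_of_nonneg_left _ hK0.le
                        apply (div_le_div_iff_of_pos_right (by linarith only [hrr1])).mpr
                        linarith only []
                    _ = K * rr^N := by
                        rw [hKdef]
                        ring
                linarith only [h9]
        · have hAξ : Aφ (w0 + ∑ j ∈ Finset.range N, w j) = xdag - E (lam N) xdag := by
            rw [map_add, map_sum, hw01]
            have htel : ∑ j ∈ Finset.range N, Aφ (w j)
                = E (lam 0) xdag - E (lam N) xdag := by
              have h10 := Finset.sum_range_sub' (fun j => E (lam j) xdag) N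
              simp only [hw1]
              exact h10
            rw [htel, hxdagtop]
            abel
          rw [hAξ, sub_sub_cancel]
          exact heE N
      -- the constant
      have hSdpos : 0 < Real.sqrt C * δ^ν := mul_pos hsqrtC (Real.rpow_pos_of_pos hδ ν)
      have hCpos : 0 < ‖xdag‖ + Real.sqrt C * δ^ν * 2 := by
        have := norm_nonneg xdag
        linarith
      have hMKqpos : 0 < (M+K)^q := Real.rpow_pos_of_pos hMK q
      have hMKnqpos : 0 < (M+K)^(-q) := Real.rpow_pos_of_pos hMK (-q)
      refine ⟨(‖xdag‖ + Real.sqrt C * δ^ν * 2) * (M+K)^q,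
        mul_pos hCpos hMKqpos, fun R hR => ?_⟩
      have hqneg : -q ≤ 0 := by linarith
      have hMKq : (M+K)^q * (M+K)^(-q) = 1 := by
        rw [← Real.rpow_add hMK]
        simp
      rcases lt_or_ge R (M + K) with hRsmall | hRbig
      · have h := hinf_le R 0 (by simpa using hR.le)
        simp only [map_zero, sub_zero] at h
        have hrq : (M+K)^(-q) ≤ R^(-q) :=
          Real.rpow_le_rpow_of_nonpos hR hRsmall.le hqneg
        have hfin : ‖xdag‖ ≤ (‖xdag‖ + Real.sqrt C * δ^ν * 2) * (M+K)^q * R^(-q) := by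
          have h11 : (‖xdag‖ + Real.sqrt C * δ^ν * 2) * (M+K)^q * (M+K)^(-q)
              ≤ (‖xdag‖ + Real.sqrt C * δ^ν * 2) * (M+K)^q * R^(-q) := by
            apply mul_le_mul_of_nonneg_left hrq (mul_pos hCpos hMKqpos).le
          calc ‖xdag‖ ≤ (‖xdag‖ + Real.sqrt C * δ^ν * 2) * ((M+K)^q * (M+K)^(-q)) := by
                rw [hMKq, mul_one]
                linarith only [hSdpos]
            _ = (‖xdag‖ + Real.sqrt C * δ^ν * 2) * (M+K)^q * (M+K)^(-q) := by ring
            _ ≤ _ := h11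
        linarith only [h, hfin]
      · have hex : ∃ N : ℕ, R < M + K * rr^(N+1) := by
          obtain ⟨n, hn⟩ := pow_unbounded_of_one_lt ((R - M)/K) hrr1
          refine ⟨n, ?_⟩
          have h12 : (R - M)/K < rr^(n+1) :=
            hn.trans_le (pow_le_pow_right₀ hrr1.le (Nat.le_succ n))
          have h13 := (div_lt_iff₀ hK).mp h12
          linarith only [h13]
        obtain ⟨N, hfind, hlow⟩ : ∃ N : ℕ, R < M + K * rr^(N+1) ∧ M + K * rr^N ≤ R := by
          refine ⟨Nat.find hex, Nat.find_spec hex, ?_⟩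
          rcases Nat.eq_zero_or_pos (Nat.find hex) with h0 | hpos
          · rw [h0]
            simpa using hRbig
          · obtain ⟨m, hm⟩ := Nat.exists_eq_succ_of_ne_zero hpos.ne'
            rw [hm]
            have h14 := Nat.find_min hex (by omega : m < Nat.find hex)
            push_neg at h14
            exact h14
        obtain ⟨hξn, hξres⟩ := hξ N
        have hstep := hinf_le R (w0 + ∑ j ∈ Finset.range N, w j) (hξn.trans (by linarith only [hlow]))
        refine hstep.trans (hξres.trans ?_)
        -- final comparison
        have hPN : 0 < (2:ℝ)^(-(N:ℝ)*ν) := hPpos _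
        have hpow1 : (1:ℝ) ≤ rr^(N+1) := one_le_pow₀ hrr1.le
        have hA4 : (rr^(N+1):ℝ)^(-q) = (2:ℝ)^(-(N:ℝ)*ν) * (2:ℝ)^(-ν) := by
          rw [hrrj (N+1), ← Real.rpow_mul (by norm_num : (0:ℝ) ≤ 2),
            ← Real.rpow_add two_pos]
          congr 1
          rw [hqdef]
          push_cast
          field_simp
          ring
        have hrrpos : (0:ℝ) < rr := lt_trans one_pos hrr1
        have hA3 : ((M+K) * rr^(N+1))^(-q) = (M+K)^(-q) * (rr^(N+1))^(-q) :=
          Real.mul_rpow hMK.le (pow_pos hrrpos _).le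
        have hA2 : ((M+K) * rr^(N+1))^(-q) ≤ (M + K * rr^(N+1))^(-q) := by
          apply Real.rpow_le_rpow_of_nonpos
            (add_pos hM (mul_pos hK (pow_pos hrrpos _))) ?_ hqneg
          have h17 : (1:ℝ) ≤ rr^(N+1) := one_le_pow₀ hrr1.le
          nlinarith [h17, hM, hK]
        have hA1 : (M + K * rr^(N+1))^(-q) ≤ R^(-q) :=
          Real.rpow_le_rpow_of_nonpos hR hfind.le hqneg
        have hA6 : (1:ℝ)/2 ≤ (2:ℝ)^(-ν) := by
          have h15 := Real.rpow_le_rpow_of_exponent_le one_le_two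
            (by linarith : (-1:ℝ) ≤ -ν)
          rw [Real.rpow_neg_one] at h15
          norm_num at h15
          linarith only [h15]
        calc Real.sqrt C * δ^ν * (2:ℝ)^(-(N:ℝ)*ν)
            ≤ (Real.sqrt C * δ^ν * 2) * ((2:ℝ)^(-(N:ℝ)*ν) * (2:ℝ)^(-ν)) := by
              have h16 : 0 ≤ (Real.sqrt C * δ^ν * (2:ℝ)^(-(N:ℝ)*ν))
                  * (2 * (2:ℝ)^(-ν) - 1) :=
                mul_nonneg (mul_pos hSdpos hPN).le (by linarith only [hA6])
              linarith only [h16]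
          _ ≤ (‖xdag‖ + Real.sqrt C * δ^ν * 2) * ((2:ℝ)^(-(N:ℝ)*ν) * (2:ℝ)^(-ν)) := by
              apply mul_le_mul_of_nonneg_right (by linarith only [norm_nonneg xdag])
                (mul_pos hPN (hPpos _)).le
          _ = (‖xdag‖ + Real.sqrt C * δ^ν * 2) * ((M+K)^q * (M+K)^(-q))
              * ((rr^(N+1))^(-q)) := by
              rw [hMKq, hA4]
              ring
          _ = (‖xdag‖ + Real.sqrt C * δ^ν * 2) * (M+K)^q * (((M+K) * rr^(N+1))^(-q)) := by
              rw [hA3]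
              ring
          _ ≤ (‖xdag‖ + Real.sqrt C * δ^ν * 2) * (M+K)^q * R^(-q) := by
              apply mul_le_mul_of_nonneg_left (hA2.trans hA1) (mul_pos hCpos hMKqpos).le
  · rintro ⟨Ct, hCt, h2⟩
    refine ⟨(Ct + 1) ^ 2, by positivity, fun t ht => ?_⟩
    have het : (e : ℝ → ℝ) t = ‖E t xdag‖ ^ 2 := he t ht.le
    have hφt : 0 ≤ φ t := hφnn t ht.le
    have key : ∀ R > (0:ℝ), ‖E t xdag‖ ≤ Ct * R ^ (-q) + φ t * R := by
      intro R hR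
      have step : ∀ ξ : X, ‖ξ‖ ≤ R → ‖E t xdag‖ - φ t * R ≤ ‖xdag - Aφ ξ‖ := by
        intro ξ hξ
        have hsplit : E t xdag = E t (xdag - Aφ ξ) + E t (Aφ ξ) := by
          rw [← map_add, sub_add_cancel]
        have hb2 : ‖E t (Aφ ξ)‖ ≤ φ t * R := by
          rw [← hAcomm t ξ]
          calc ‖Aφ (E t ξ)‖ ≤ φ t * ‖E t ξ‖ := hA0ub t ht.le ξ
            _ ≤ φ t * R := mul_le_mul_of_nonneg_left ((hproj t ξ).trans hξ) hφt
        have htri : ‖E t xdag‖ ≤ ‖E t (xdag - Aφ ξ)‖ + ‖E t (Aφ ξ)‖ := by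
          rw [hsplit]; exact norm_add_le _ _
        have := hproj t (xdag - Aφ ξ)
        linarith
      haveI : Nonempty {ξ : X // ‖ξ‖ ≤ R} := ⟨⟨0, by simpa using hR.le⟩⟩
      have hle : ‖E t xdag‖ - φ t * R ≤ ⨅ ξ : {ξ : X // ‖ξ‖ ≤ R}, ‖xdag - Aφ ξ.1‖ :=
        le_ciInf fun ξ => step ξ.1 ξ.2
      have := h2 R hR
      linarith
    by_cases hφ0t : φ t = 0
    · have h0 : ‖E t xdag‖ ≤ 0 := by
        have htend : Tendsto (fun R : ℝ => Ct * R ^ (-q)) atTop (nhds 0) := by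
          have := (tendsto_rpow_neg_atTop hq0).const_mul Ct
          simpa using this
        apply ge_of_tendsto htend
        filter_upwards [eventually_gt_atTop 0] with R hR
        have := key R hR
        rw [hφ0t] at this
        linarith
      have hEt0 : ‖E t xdag‖ = 0 := le_antisymm h0 (norm_nonneg _)
      rw [het, hEt0, hφ0t]
      rw [Real.zero_rpow (by positivity)]
      norm_num
    · have hφtpos : 0 < φ t := lt_of_le_of_ne hφt (Ne.symm hφ0t)
      have hkey := key (φ t ^ (ν - 1)) (Real.rpow_pos_of_pos hφtpos _)
      have e1 : (φ t ^ (ν - 1)) ^ (-q) = φ t ^ ν := by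
        rw [← Real.rpow_mul hφt]
        congr 1
        rw [hqdef]
        field_simp
        ring
      have e2 : φ t * φ t ^ (ν - 1) = φ t ^ ν := by
        nth_rewrite 1 [← Real.rpow_one (φ t)]
        rw [← Real.rpow_add hφtpos]
        congr 1
        ring
      rw [e1, e2] at hkey
      have hchain : ‖E t xdag‖ ≤ (Ct + 1) * φ t ^ ν := by nlinarith [Real.rpow_pos_of_pos hφtpos ν]
      have hsq : ‖E t xdag‖ ^ 2 ≤ ((Ct + 1) * φ t ^ ν) ^ 2 :=
        pow_le_pow_left₀ (norm_nonneg _) hchain 2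
      have e3 : (φ t ^ ν) ^ (2:ℕ) = φ t ^ (2 * ν) := by
        rw [← Real.rpow_natCast (φ t ^ ν) 2, ← Real.rpow_mul hφt]
        congr 1
        push_cast
        ring
      rw [mul_pow, e3] at hsq
      rw [het]
      exact hsq
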